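/- For all n ≥ 1, one has ξ^{-3h} ≤ Σ_{σ∈Ω_n} |J_σ|^{h} ≤ ξ^{3h}. -/

import Mathlib

open MeasureTheory Filter Metric

noncomputable section

/-- A cookie-cutter system on `J = [0,1]`. -/
structure CookieCutter where
  N : ℕ
  hN : 2 ≤ N
  Jsub : Fin N → Set ℝ
  f : ℝ → ℝ
  φ : Fin N → ℝ → ℝ
  c : ℝ
  γ : ℝ
  b : ℝ
  B : ℝ
  hJsub_sub : ∀ j, Jsub j ⊆ Set.Icc 0 1
  hJsub_interval : ∀ j, ∃ u v : ℝ, u ≤ v ∧ Jsub j = Set.Icc u v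
  hJsub_disj : ∀ i j, i ≠ j → Disjoint (Jsub i) (Jsub j)
  hbij : ∀ j, Set.BijOn f (Jsub j) (Set.Icc 0 1)
  hφ_maps : ∀ j, ∀ x ∈ Set.Icc (0:ℝ) 1, φ j x ∈ Jsub j
  hφ_rinv : ∀ j, ∀ x ∈ Set.Icc (0:ℝ) 1, f (φ j x) = x
  hφ_linv : ∀ j, ∀ x ∈ Jsub j, φ j (f x) = x
  hfdiff : ∀ j, ∀ x ∈ Jsub j, DifferentiableAt ℝ f x
  hφdiff : ∀ j, ∀ x ∈ Set.Icc (0:ℝ) 1, DifferentiableAt ℝ (φ j) x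
  hc : 0 < c
  hγ : γ ∈ Set.Ioc (0:ℝ) 1
  hHolder : ∀ j, ∀ x ∈ Jsub j, ∀ y ∈ Jsub j, |deriv f x - deriv f y| ≤ c * |x - y| ^ γ
  hb : IsGLB ((fun x => |deriv f x|) '' ⋃ j, Jsub j) b
  hB : IsLUB ((fun x => |deriv f x|) '' ⋃ j, Jsub j) B
  hb1 : 1 < b

namespace CookieCutter

variable (cc : CookieCutter)

/-- `φ_σ = φ_{σ_1} ∘ ⋯ ∘ φ_{σ_n}` for a word `σ`. -/
def wordMap : List (Fin cc.N) → ℝ → ℝ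
  | [] => id
  | j :: rest => cc.φ j ∘ wordMap rest

/-- The basic interval `J_σ = φ_σ(J)`. -/
def Jc (σ : List (Fin cc.N)) : Set ℝ := cc.wordMap σ '' Set.Icc 0 1

/-- The diameter `|J_σ|`. -/
def diamJ (σ : List (Fin cc.N)) : ℝ := Metric.diam (cc.Jc σ)

/-- `‖φ'_σ‖ = sup_{x ∈ J} |φ'_σ(x)|`. -/
def φnorm (σ : List (Fin cc.N)) : ℝ :=
  sSup ((fun x => |deriv (cc.wordMap σ) x|) '' Set.Icc 0 1)

/-- The distortion constant `ξ = exp (c / (b^γ − 1))`. -/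
def xi : ℝ := Real.exp (cc.c / (cc.b ^ cc.γ - 1))

/-- The cookie-cutter set `E = ⋂_{n ≥ 1} ⋃_{σ ∈ Ω_n} J_σ`. -/
def E : Set ℝ := ⋂ (n : ℕ) (_ : 1 ≤ n), ⋃ σ : Fin n → Fin cc.N, cc.Jc (List.ofFn σ)

/-- `η = ξ^{9h}`. -/
def eta (h : ℝ) : ℝ := cc.xi ^ ((9:ℝ) * h)

/-- `L = η³ ξ^{3h}`. -/
def Lconst (h : ℝ) : ℝ := (cc.eta h) ^ 3 * cc.xi ^ ((3:ℝ) * h)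

/-- A Gibbs-like measure for the cookie-cutter system: a Borel probability measure
supported on `E` with `η⁻¹|J_σ|^h ≤ μ(J_σ) ≤ η|J_σ|^h` for every word `σ`. -/
def IsGibbsLike (μ : Measure ℝ) (h : ℝ) : Prop :=
  IsProbabilityMeasure μ ∧ μ (cc.Eᶜ) = 0 ∧
    ∀ σ : List (Fin cc.N), σ ≠ [] →
      (cc.eta h)⁻¹ * cc.diamJ σ ^ h ≤ (μ (cc.Jc σ)).toReal ∧
      (μ (cc.Jc σ)).toReal ≤ cc.eta h * cc.diamJ σ ^ h

/-- A finite maximal antichain in `Ω`. -/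
def IsFMA (Γ : Finset (List (Fin cc.N))) : Prop :=
  (∀ σ ∈ Γ, σ ≠ []) ∧
  (∀ ω : ℕ → Fin cc.N, ∃ k : ℕ, 1 ≤ k ∧ (List.ofFn fun i : Fin k => ω i) ∈ Γ) ∧
  ∀ σ ∈ Γ, ∀ τ ∈ Γ, σ <+: τ → σ = τ

end CookieCutter

/-- The `n`-th quantization error of order `r`. -/
def Vnr (μ : Measure ℝ) (n : ℕ) (r : ℝ) : ℝ :=
  sInf ((fun α : Finset ℝ => ∫ x, Metric.infDist x (α : Set ℝ) ^ r ∂μ) ''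
    {α : Finset ℝ | α.Nonempty ∧ α.card ≤ n})

/-- The auxiliary quantization error `u_{n,r}` with `U = (0,1)`. -/
def unr (μ : Measure ℝ) (n : ℕ) (r : ℝ) : ℝ :=
  sInf ((fun α : Finset ℝ =>
      ∫ x, Metric.infDist x ((α : Set ℝ) ∪ (Set.Ioo (0:ℝ) 1)ᶜ) ^ r ∂μ) ''
    {α : Finset ℝ | α.card ≤ n})


namespace CCAux

variable (cc : CookieCutter)

local notation "I" => Set.Icc (0:ℝ) 1

lemma b_pos : (0:ℝ) < cc.b := lt_trans one_pos cc.hb1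

lemma deriv_f_lb {j} {x : ℝ} (hx : x ∈ cc.Jsub j) : cc.b ≤ |deriv cc.f x| :=
  cc.hb.1 ⟨x, Set.mem_iUnion.2 ⟨j, hx⟩, rfl⟩

lemma deriv_f_ub {j} {x : ℝ} (hx : x ∈ cc.Jsub j) : |deriv cc.f x| ≤ cc.B :=
  cc.hB.1 ⟨x, Set.mem_iUnion.2 ⟨j, hx⟩, rfl⟩

lemma B_pos : (0:ℝ) < cc.B := by
  have hj : (0:ℝ) ∈ I := by constructor <;> norm_num
  have hN0 : 0 < cc.N := lt_of_lt_of_le two_pos cc.hN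
  have h0 : cc.φ ⟨0, hN0⟩ 0 ∈ cc.Jsub ⟨0, hN0⟩ := cc.hφ_maps _ 0 hj
  exact lt_of_lt_of_le (b_pos cc) (le_trans (deriv_f_lb cc h0) (deriv_f_ub cc h0))

lemma phi_chain (j : Fin cc.N) {x : ℝ} (hx : x ∈ I) :
    deriv cc.f (cc.φ j x) * deriv (cc.φ j) x = 1 := by
  have hu := cc.hφ_maps j x hx
  have h1 : HasDerivAt cc.f (deriv cc.f (cc.φ j x)) (cc.φ j x) := (cc.hfdiff j _ hu).hasDerivAt
  have h2 : HasDerivAt (cc.φ j) (deriv (cc.φ j) x) x := (cc.hφdiff j x hx).hasDerivAt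
  have hcmp : HasDerivWithinAt (cc.f ∘ cc.φ j)
      (deriv cc.f (cc.φ j x) * deriv (cc.φ j) x) I x := (h1.comp x h2).hasDerivWithinAt
  have hud : UniqueDiffWithinAt ℝ I x := (uniqueDiffOn_Icc one_pos) x hx
  have e1 : derivWithin (cc.f ∘ cc.φ j) I x = deriv cc.f (cc.φ j x) * deriv (cc.φ j) x :=
    hcmp.derivWithin hud
  have e2 : derivWithin (cc.f ∘ cc.φ j) I x = derivWithin id I x :=
    derivWithin_congr (fun y hy => cc.hφ_rinv j y hy) (cc.hφ_rinv j x hx)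
  rw [e2, derivWithin_id x _ hud] at e1
  exact e1.symm

lemma abs_deriv_phi (j : Fin cc.N) {x : ℝ} (hx : x ∈ I) :
    |deriv (cc.φ j) x| = |deriv cc.f (cc.φ j x)|⁻¹ := by
  have h := phi_chain cc j hx
  have h2 : |deriv cc.f (cc.φ j x)| * |deriv (cc.φ j) x| = 1 := by
    rw [← abs_mul, h, abs_one]
  exact eq_inv_of_mul_eq_one_left (by rw [mul_comm]; exact h2)

lemma phi_deriv_lb (j : Fin cc.N) {x : ℝ} (hx : x ∈ I) : 1 / cc.B ≤ |deriv (cc.φ j) x| := by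
  rw [abs_deriv_phi cc j hx, one_div]
  exact inv_anti₀ (lt_of_lt_of_le (b_pos cc) (deriv_f_lb cc (cc.hφ_maps j x hx)))
    (deriv_f_ub cc (cc.hφ_maps j x hx))

lemma phi_deriv_ub (j : Fin cc.N) {x : ℝ} (hx : x ∈ I) : |deriv (cc.φ j) x| ≤ 1 / cc.b := by
  rw [abs_deriv_phi cc j hx, one_div]
  exact inv_anti₀ (b_pos cc) (deriv_f_lb cc (cc.hφ_maps j x hx))

lemma wm_maps : ∀ σ : List (Fin cc.N), ∀ x ∈ I, cc.wordMap σ x ∈ I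
  | [], x, hx => hx
  | j :: σ, x, hx => cc.hJsub_sub j (cc.hφ_maps j _ (wm_maps σ x hx))

lemma wm_diff : ∀ σ : List (Fin cc.N), ∀ x ∈ I, DifferentiableAt ℝ (cc.wordMap σ) x
  | [], x, hx => differentiableAt_id
  | j :: σ, x, hx =>
    (cc.hφdiff j _ (wm_maps cc σ x hx)).comp x (wm_diff σ x hx)

lemma wm_deriv_cons (j : Fin cc.N) (σ : List (Fin cc.N)) {x : ℝ} (hx : x ∈ I) :
    deriv (cc.wordMap (j :: σ)) x = deriv (cc.φ j) (cc.wordMap σ x) * deriv (cc.wordMap σ) x :=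
  deriv_comp x (cc.hφdiff j _ (wm_maps cc σ x hx)) (wm_diff cc σ x hx)

lemma wm_deriv_lb : ∀ σ : List (Fin cc.N), ∀ x ∈ I,
    (1 / cc.B) ^ σ.length ≤ |deriv (cc.wordMap σ) x|
  | [], x, hx => by simp [CookieCutter.wordMap]
  | j :: σ, x, hx => by
    rw [wm_deriv_cons cc j σ hx, abs_mul, List.length_cons, pow_succ]
    have h1 := phi_deriv_lb cc j (wm_maps cc σ x hx)
    have h2 := wm_deriv_lb σ x hx
    have hB := B_pos cc
    exact mul_le_mul h2 h1 (by positivity) (abs_nonneg _) |>.trans_eq (mul_comm _ _) |>.trans_eq rfl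

lemma wm_deriv_ub : ∀ σ : List (Fin cc.N), ∀ x ∈ I,
    |deriv (cc.wordMap σ) x| ≤ (1 / cc.b) ^ σ.length
  | [], x, hx => by simp [CookieCutter.wordMap]
  | j :: σ, x, hx => by
    rw [wm_deriv_cons cc j σ hx, abs_mul, List.length_cons, pow_succ]
    have h1 := phi_deriv_ub cc j (wm_maps cc σ x hx)
    have h2 := wm_deriv_ub σ x hx
    have hb := b_pos cc
    calc |deriv (cc.φ j) (cc.wordMap σ x)| * |deriv (cc.wordMap σ) x|
        ≤ (1/cc.b) * (1/cc.b) ^ σ.length :=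
          mul_le_mul h1 h2 (abs_nonneg _) (by positivity)
      _ = (1/cc.b) ^ σ.length * (1/cc.b) := mul_comm _ _

lemma wm_deriv_pos (σ : List (Fin cc.N)) {x : ℝ} (hx : x ∈ I) :
    0 < |deriv (cc.wordMap σ) x| :=
  lt_of_lt_of_le (by have := B_pos cc; positivity) (wm_deriv_lb cc σ x hx)

lemma wm_lipschitz (σ : List (Fin cc.N)) {C : ℝ}
    (hC : ∀ x ∈ I, |deriv (cc.wordMap σ) x| ≤ C) {x y : ℝ} (hx : x ∈ I) (hy : y ∈ I) :
    |cc.wordMap σ x - cc.wordMap σ y| ≤ C * |x - y| := by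
  have := Convex.norm_image_sub_le_of_norm_hasDerivWithin_le
    (f := cc.wordMap σ) (f' := deriv (cc.wordMap σ)) (s := I) (C := C)
    (fun z hz => (wm_diff cc σ z hz).hasDerivAt.hasDerivWithinAt)
    (fun z hz => by rw [Real.norm_eq_abs]; exact hC z hz) (convex_Icc 0 1) hy hx
  simpa [Real.norm_eq_abs] using this

lemma wm_append (σ τ : List (Fin cc.N)) :
    cc.wordMap (σ ++ τ) = cc.wordMap σ ∘ cc.wordMap τ := by
  induction σ with
  | nil => rfl
  | cons j σ ih => show cc.φ j ∘ cc.wordMap (σ ++ τ) = (cc.φ j ∘ cc.wordMap σ) ∘ cc.wordMap τ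
                   rw [ih]; rfl

lemma wm_deriv_append (σ τ : List (Fin cc.N)) {x : ℝ} (hx : x ∈ I) :
    deriv (cc.wordMap (σ ++ τ)) x
      = deriv (cc.wordMap σ) (cc.wordMap τ x) * deriv (cc.wordMap τ) x := by
  rw [wm_append]
  exact deriv_comp x (wm_diff cc σ _ (wm_maps cc τ x hx)) (wm_diff cc τ x hx)


lemma gamma_pos : 0 < cc.γ := cc.hγ.1

lemma one_lt_bgamma : 1 < cc.b ^ cc.γ :=
  (Real.one_lt_rpow_iff_of_pos (b_pos cc)).2 (Or.inl ⟨cc.hb1, gamma_pos cc⟩)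

lemma bgamma_pos : 0 < cc.b ^ cc.γ := lt_trans one_pos (one_lt_bgamma cc)

lemma Cdist_pos : 0 < cc.c / (cc.b ^ cc.γ - 1) :=
  div_pos cc.hc (by linarith [one_lt_bgamma cc])

lemma r_lt_one : (1 / cc.b) ^ cc.γ < 1 := by
  rw [one_div, Real.inv_rpow (b_pos cc).le, inv_lt_one_iff₀]
  exact Or.inr (one_lt_bgamma cc)

lemma r_pos : 0 < (1 / cc.b) ^ cc.γ :=
  Real.rpow_pos_of_pos (by have := b_pos cc; positivity) _

lemma pow_rpow_comm {a : ℝ} (ha : 0 ≤ a) (γ : ℝ) (k : ℕ) : (a ^ k) ^ γ = (a ^ γ) ^ k := by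
  rw [← Real.rpow_natCast a k, ← Real.rpow_mul ha, mul_comm, Real.rpow_mul ha,
    Real.rpow_natCast]

lemma abs_sub_le_one {x y : ℝ} (hx : x ∈ I) (hy : y ∈ I) : |x - y| ≤ 1 := by
  rw [abs_sub_le_iff]
  constructor <;> [skip; skip] <;> (obtain ⟨h1, h2⟩ := hx; obtain ⟨h3, h4⟩ := hy; linarith)

lemma log_phi_dist (j : Fin cc.N) {u v : ℝ} (hu : u ∈ I) (hv : v ∈ I) :
    Real.log |deriv (cc.φ j) u| - Real.log |deriv (cc.φ j) v|
      ≤ (cc.c / cc.b) * ((1 / cc.b) * |u - v|) ^ cc.γ := by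
  have hb := b_pos cc
  have hpu := cc.hφ_maps j u hu
  have hpv := cc.hφ_maps j v hv
  set p := cc.φ j u with hp
  set q := cc.φ j v with hq
  have hfp : cc.b ≤ |deriv cc.f p| := deriv_f_lb cc hpu
  have hfq : cc.b ≤ |deriv cc.f q| := deriv_f_lb cc hpv
  have hfp0 : 0 < |deriv cc.f p| := lt_of_lt_of_le hb hfp
  have hfq0 : 0 < |deriv cc.f q| := lt_of_lt_of_le hb hfq
  rw [abs_deriv_phi cc j hu, abs_deriv_phi cc j hv, Real.log_inv, Real.log_inv, ← hp, ← hq]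
  have step1 : -Real.log |deriv cc.f p| - -Real.log |deriv cc.f q|
      = Real.log (|deriv cc.f q| / |deriv cc.f p|) := by
    rw [Real.log_div (ne_of_gt hfq0) (ne_of_gt hfp0)]; ring
  rw [step1]
  have step2 : Real.log (|deriv cc.f q| / |deriv cc.f p|)
      ≤ |deriv cc.f q - deriv cc.f p| / cc.b := by
    calc Real.log (|deriv cc.f q| / |deriv cc.f p|)
        ≤ |deriv cc.f q| / |deriv cc.f p| - 1 :=
          Real.log_le_sub_one_of_pos (div_pos hfq0 hfp0)
      _ = (|deriv cc.f q| - |deriv cc.f p|) / |deriv cc.f p| := by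
          field_simp
      _ ≤ |deriv cc.f q - deriv cc.f p| / |deriv cc.f p| := by
          gcongr
          exact abs_sub_abs_le_abs_sub _ _
      _ ≤ |deriv cc.f q - deriv cc.f p| / cc.b := by
          gcongr
  have step3 : |deriv cc.f q - deriv cc.f p| ≤ cc.c * |q - p| ^ cc.γ :=
    cc.hHolder j q hpv p hpu
  have step4 : |q - p| ≤ (1 / cc.b) * |u - v| := by
    have : ∀ x ∈ I, |deriv (cc.wordMap [j]) x| ≤ 1 / cc.b := by
      intro x hx
      have : cc.wordMap [j] = cc.φ j ∘ id := rfl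
      rw [this]
      exact phi_deriv_ub cc j hx
    have hl := wm_lipschitz cc [j] this hv hu
    simpa [CookieCutter.wordMap, pow_one, abs_sub_comm v u] using hl
  have step5 : |q - p| ^ cc.γ ≤ ((1 / cc.b) * |u - v|) ^ cc.γ :=
    Real.rpow_le_rpow (abs_nonneg _) step4 (gamma_pos cc).le
  calc Real.log (|deriv cc.f q| / |deriv cc.f p|)
      ≤ |deriv cc.f q - deriv cc.f p| / cc.b := step2
    _ ≤ (cc.c * |q - p| ^ cc.γ) / cc.b := by gcongr
    _ ≤ (cc.c * ((1 / cc.b) * |u - v|) ^ cc.γ) / cc.b := by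
        gcongr
        exact cc.hc.le
    _ = (cc.c / cc.b) * ((1 / cc.b) * |u - v|) ^ cc.γ := by ring


lemma Cdist_mul : (cc.c / (cc.b ^ cc.γ - 1)) * (1 - (1 / cc.b) ^ cc.γ) = cc.c * (1 / cc.b) ^ cc.γ := by
  have h1 : cc.b ^ cc.γ ≠ 0 := ne_of_gt (bgamma_pos cc)
  have h2 : cc.b ^ cc.γ - 1 ≠ 0 := by have := one_lt_bgamma cc; intro h; linarith
  rw [one_div, Real.inv_rpow (b_pos cc).le]
  field_simp

lemma log_wm_dist : ∀ σ : List (Fin cc.N), ∀ x ∈ I, ∀ y ∈ I,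
    Real.log |deriv (cc.wordMap σ) x| - Real.log |deriv (cc.wordMap σ) y|
      ≤ (cc.c / (cc.b ^ cc.γ - 1)) * (1 - ((1 / cc.b) ^ cc.γ) ^ σ.length)
  | [], x, hx, y, hy => by simp [CookieCutter.wordMap]
  | j :: τ, x, hx, y, hy => by
    have hb := b_pos cc
    have hwx := wm_maps cc τ x hx
    have hwy := wm_maps cc τ y hy
    have hdx := wm_deriv_pos cc τ hx
    have hdy := wm_deriv_pos cc τ hy
    have hpx : 0 < |deriv (cc.φ j) (cc.wordMap τ x)| :=
      lt_of_lt_of_le (by have := B_pos cc; positivity) (phi_deriv_lb cc j hwx)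
    have hpy : 0 < |deriv (cc.φ j) (cc.wordMap τ y)| :=
      lt_of_lt_of_le (by have := B_pos cc; positivity) (phi_deriv_lb cc j hwy)
    rw [wm_deriv_cons cc j τ hx, wm_deriv_cons cc j τ hy, abs_mul, abs_mul,
      Real.log_mul (ne_of_gt hpx) (ne_of_gt hdx),
      Real.log_mul (ne_of_gt hpy) (ne_of_gt hdy)]
    set r := (1 / cc.b) ^ cc.γ with hr
    set C := cc.c / (cc.b ^ cc.γ - 1) with hC
    set n := τ.length with hn
    have T2 : Real.log |deriv (cc.wordMap τ) x| - Real.log |deriv (cc.wordMap τ) y|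
        ≤ C * (1 - r ^ n) := log_wm_dist τ x hx y hy
    have T1 : Real.log |deriv (cc.φ j) (cc.wordMap τ x)|
        - Real.log |deriv (cc.φ j) (cc.wordMap τ y)|
        ≤ (cc.c / cc.b) * r ^ (n + 1) := by
      have h0 := log_phi_dist cc j hwx hwy
      have hlip : |cc.wordMap τ x - cc.wordMap τ y| ≤ (1 / cc.b) ^ n := by
        calc |cc.wordMap τ x - cc.wordMap τ y| ≤ (1 / cc.b) ^ n * |x - y| :=
              wm_lipschitz cc τ (fun z hz => wm_deriv_ub cc τ z hz) hx hy
          _ ≤ (1 / cc.b) ^ n * 1 := by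
              gcongr
              exact abs_sub_le_one hx hy
          _ = (1 / cc.b) ^ n := mul_one _
      have harg : (1 / cc.b) * |cc.wordMap τ x - cc.wordMap τ y| ≤ (1 / cc.b) ^ (n + 1) := by
        rw [pow_succ, mul_comm ((1/cc.b)^n) (1/cc.b)]
        gcongr
      have hrpow : ((1 / cc.b) * |cc.wordMap τ x - cc.wordMap τ y|) ^ cc.γ
          ≤ r ^ (n + 1) := by
        rw [hr, ← pow_rpow_comm (by positivity : (0:ℝ) ≤ 1/cc.b) cc.γ (n+1)]
        exact Real.rpow_le_rpow (by positivity) harg (gamma_pos cc).le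
      calc Real.log |deriv (cc.φ j) (cc.wordMap τ x)|
          - Real.log |deriv (cc.φ j) (cc.wordMap τ y)|
          ≤ (cc.c / cc.b) * ((1 / cc.b) * |cc.wordMap τ x - cc.wordMap τ y|) ^ cc.γ := h0
        _ ≤ (cc.c / cc.b) * r ^ (n + 1) := by
            gcongr
            exact (div_pos cc.hc hb).le
    have hfinal : (cc.c / cc.b) * r ^ (n + 1) + C * (1 - r ^ n) ≤ C * (1 - r ^ (n + 1)) := by
      have e : r ^ (n + 1) = r * r ^ n := by ring
      have key : C * (1 - r * r ^ n) - C * (1 - r ^ n) = cc.c * (r * r ^ n) := by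
        have hCm : C * (1 - r) = cc.c * r := Cdist_mul cc
        calc C * (1 - r * r ^ n) - C * (1 - r ^ n) = (C * (1 - r)) * r ^ n := by ring
          _ = cc.c * (r * r ^ n) := by rw [hCm]; ring
      have hcb : cc.c / cc.b ≤ cc.c := by
        rw [div_le_iff₀ hb]
        nlinarith [cc.hc, cc.hb1]
      have hrr : (0:ℝ) < r := r_pos cc
      have m : cc.c / cc.b * (r * r ^ n) ≤ cc.c * (r * r ^ n) :=
        mul_le_mul_of_nonneg_right hcb (by positivity)
      rw [e]
      linarith [key, m]
    have hlen : (j :: τ).length = n + 1 := by simp [hn]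
    rw [hlen]
    linarith

lemma xi_pos : 0 < cc.xi := Real.exp_pos _

lemma one_le_xi : 1 ≤ cc.xi := Real.one_le_exp (Cdist_pos cc).le

lemma wm_dist_le (σ : List (Fin cc.N)) {x y : ℝ} (hx : x ∈ I) (hy : y ∈ I) :
    |deriv (cc.wordMap σ) x| ≤ cc.xi * |deriv (cc.wordMap σ) y| := by
  have h1 := log_wm_dist cc σ x hx y hy
  have h2 : (cc.c / (cc.b ^ cc.γ - 1)) * (1 - ((1 / cc.b) ^ cc.γ) ^ σ.length)
      ≤ cc.c / (cc.b ^ cc.γ - 1) := by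
    have := Cdist_pos cc
    have : (0:ℝ) ≤ ((1 / cc.b) ^ cc.γ) ^ σ.length := le_of_lt (pow_pos (r_pos cc) _)
    nlinarith [Cdist_pos cc]
  have hdx := wm_deriv_pos cc σ hx
  have hdy := wm_deriv_pos cc σ hy
  have hlog : Real.log |deriv (cc.wordMap σ) x|
      ≤ Real.log (cc.xi * |deriv (cc.wordMap σ) y|) := by
    rw [Real.log_mul (ne_of_gt (xi_pos cc)) (ne_of_gt hdy), CookieCutter.xi, Real.log_exp]
    linarith
  exact (Real.log_le_log_iff hdx (mul_pos (xi_pos cc) hdy)).1 hlog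

lemma φnorm_bddAbove (σ : List (Fin cc.N)) :
    BddAbove ((fun x => |deriv (cc.wordMap σ) x|) '' I) :=
  ⟨(1 / cc.b) ^ σ.length, fun z ⟨x, hx, hxz⟩ => hxz ▸ wm_deriv_ub cc σ x hx⟩

lemma le_φnorm (σ : List (Fin cc.N)) {x : ℝ} (hx : x ∈ I) :
    |deriv (cc.wordMap σ) x| ≤ cc.φnorm σ :=
  le_csSup (φnorm_bddAbove cc σ) ⟨x, hx, rfl⟩

lemma φnorm_le (σ : List (Fin cc.N)) {M : ℝ}
    (hM : ∀ x ∈ I, |deriv (cc.wordMap σ) x| ≤ M) : cc.φnorm σ ≤ M :=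
  csSup_le (⟨_, ⟨0, ⟨le_refl 0, zero_le_one⟩, rfl⟩⟩) (fun z ⟨x, hx, hxz⟩ => hxz ▸ hM x hx)

lemma φnorm_pos (σ : List (Fin cc.N)) : 0 < cc.φnorm σ :=
  lt_of_lt_of_le (wm_deriv_pos cc σ ⟨le_refl 0, zero_le_one⟩)
    (le_φnorm cc σ ⟨le_refl 0, zero_le_one⟩)

lemma φnorm_le_xi_mul (σ : List (Fin cc.N)) {y : ℝ} (hy : y ∈ I) :
    cc.φnorm σ ≤ cc.xi * |deriv (cc.wordMap σ) y| :=
  φnorm_le cc σ (fun x hx => wm_dist_le cc σ hx hy)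

lemma diamJ_le (σ : List (Fin cc.N)) : cc.diamJ σ ≤ cc.φnorm σ := by
  apply Metric.diam_le_of_forall_dist_le (φnorm_pos cc σ).le
  rintro u ⟨x, hx, rfl⟩ v ⟨y, hy, rfl⟩
  rw [Real.dist_eq]
  calc |cc.wordMap σ x - cc.wordMap σ y| ≤ cc.φnorm σ * |x - y| :=
      wm_lipschitz cc σ (fun z hz => le_φnorm cc σ hz) hx hy
    _ ≤ cc.φnorm σ * 1 :=
      mul_le_mul_of_nonneg_left (abs_sub_le_one hx hy) (φnorm_pos cc σ).le
    _ = cc.φnorm σ := mul_one _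

lemma diamJ_ge (σ : List (Fin cc.N)) : cc.xi⁻¹ * cc.φnorm σ ≤ cc.diamJ σ := by
  obtain ⟨z, hz, hslope⟩ := exists_hasDerivAt_eq_slope (cc.wordMap σ) (deriv (cc.wordMap σ))
    one_pos
    (fun x hx => (wm_diff cc σ x hx).continuousAt.continuousWithinAt)
    (fun x hx => (wm_diff cc σ x (Set.Ioo_subset_Icc_self hx)).hasDerivAt)
  have hzI : z ∈ I := Set.Ioo_subset_Icc_self hz
  have h1 : cc.xi⁻¹ * cc.φnorm σ ≤ |deriv (cc.wordMap σ) z| := by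
    rw [inv_mul_le_iff₀ (xi_pos cc)]
    exact φnorm_le_xi_mul cc σ hzI
  have h2 : |deriv (cc.wordMap σ) z| ≤ cc.diamJ σ := by
    rw [hslope]
    have hbd : Bornology.IsBounded (cc.Jc σ) :=
      (Metric.isBounded_Icc (0:ℝ) 1).subset
        (fun u ⟨x, hx, hxu⟩ => hxu ▸ wm_maps cc σ x hx)
    have := Metric.dist_le_diam_of_mem hbd
      (Set.mem_image_of_mem _ (Set.right_mem_Icc.2 zero_le_one))
      (Set.mem_image_of_mem _ (Set.left_mem_Icc.2 zero_le_one))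
    rw [Real.dist_eq] at this
    calc |(cc.wordMap σ 1 - cc.wordMap σ 0) / (1 - 0)|
        = |cc.wordMap σ 1 - cc.wordMap σ 0| := by norm_num
      _ ≤ Metric.diam (cc.Jc σ) := this
  linarith

lemma φnorm_append_le (σ τ : List (Fin cc.N)) :
    cc.φnorm (σ ++ τ) ≤ cc.φnorm σ * cc.φnorm τ := by
  apply φnorm_le
  intro x hx
  rw [wm_deriv_append cc σ τ hx, abs_mul]
  exact mul_le_mul (le_φnorm cc σ (wm_maps cc τ x hx)) (le_φnorm cc τ hx)
    (abs_nonneg _) (φnorm_pos cc σ).le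

lemma le_φnorm_append (σ τ : List (Fin cc.N)) :
    cc.xi⁻¹ * (cc.φnorm σ * cc.φnorm τ) ≤ cc.φnorm (σ ++ τ) := by
  have hxi := xi_pos cc
  have hσ := φnorm_pos cc σ
  have hτ := φnorm_pos cc τ
  have key : ∀ x ∈ I, cc.xi⁻¹ * cc.φnorm σ * |deriv (cc.wordMap τ) x|
      ≤ cc.φnorm (σ ++ τ) := by
    intro x hx
    have h1 : cc.xi⁻¹ * cc.φnorm σ ≤ |deriv (cc.wordMap σ) (cc.wordMap τ x)| := by
      rw [inv_mul_le_iff₀ hxi]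
      exact φnorm_le_xi_mul cc σ (wm_maps cc τ x hx)
    calc cc.xi⁻¹ * cc.φnorm σ * |deriv (cc.wordMap τ) x|
        ≤ |deriv (cc.wordMap σ) (cc.wordMap τ x)| * |deriv (cc.wordMap τ) x| := by
          gcongr
      _ = |deriv (cc.wordMap (σ ++ τ)) x| := by rw [wm_deriv_append cc σ τ hx, abs_mul]
      _ ≤ cc.φnorm (σ ++ τ) := le_φnorm cc (σ ++ τ) hx
  have hpos : 0 < cc.xi⁻¹ * cc.φnorm σ := by positivity
  have hτle : cc.φnorm τ ≤ cc.φnorm (σ ++ τ) / (cc.xi⁻¹ * cc.φnorm σ) := by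
    apply φnorm_le
    intro x hx
    rw [le_div_iff₀ hpos, mul_comm]
    exact key x hx
  calc cc.xi⁻¹ * (cc.φnorm σ * cc.φnorm τ) = (cc.xi⁻¹ * cc.φnorm σ) * cc.φnorm τ := by ring
    _ ≤ (cc.xi⁻¹ * cc.φnorm σ) * (cc.φnorm (σ ++ τ) / (cc.xi⁻¹ * cc.φnorm σ)) := by gcongr
    _ = cc.φnorm (σ ++ τ) := by field_simp


lemma ofFn_append {m n : ℕ} (a : Fin m → Fin cc.N) (b : Fin n → Fin cc.N) :
    List.ofFn (Fin.append a b) = List.ofFn a ++ List.ofFn b := by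
  rw [List.ofFn_add]
  congr 1
  · exact congrArg List.ofFn (funext fun i => Fin.append_left a b i)
  · exact congrArg List.ofFn (funext fun i => Fin.append_right a b i)

def S (cc : CookieCutter) (h : ℝ) (k : ℕ) : ℝ :=
  ∑ σ : Fin k → Fin cc.N, cc.φnorm (List.ofFn σ) ^ h

lemma S_pos (h : ℝ) (k : ℕ) : 0 < S cc h k := by
  haveI : Nonempty (Fin cc.N) := ⟨⟨0, lt_of_lt_of_le two_pos cc.hN⟩⟩
  exact Finset.sum_pos (fun σ _ => Real.rpow_pos_of_pos (φnorm_pos cc _) h)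
    Finset.univ_nonempty

lemma S_split (h : ℝ) (m n : ℕ) :
    S cc h (m + n) = ∑ p : (Fin m → Fin cc.N) × (Fin n → Fin cc.N),
      cc.φnorm (List.ofFn p.1 ++ List.ofFn p.2) ^ h :=
  (Fintype.sum_equiv (Fin.appendEquiv m n)
    (fun p => cc.φnorm (List.ofFn p.1 ++ List.ofFn p.2) ^ h)
    (fun ρ => cc.φnorm (List.ofFn ρ) ^ h)
    (fun p => by
      show cc.φnorm (List.ofFn p.1 ++ List.ofFn p.2) ^ h
        = cc.φnorm (List.ofFn (Fin.append p.1 p.2)) ^ h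
      rw [ofFn_append])).symm

lemma S_submul (h : ℝ) (hh : 0 < h) (m n : ℕ) :
    S cc h (m + n) ≤ S cc h m * S cc h n := by
  rw [S_split cc h m n, S, S, Finset.sum_mul_sum, Fintype.sum_prod_type]
  apply Finset.sum_le_sum
  intro a _
  apply Finset.sum_le_sum
  intro b _
  calc cc.φnorm (List.ofFn a ++ List.ofFn b) ^ h
      ≤ (cc.φnorm (List.ofFn a) * cc.φnorm (List.ofFn b)) ^ h :=
        Real.rpow_le_rpow (φnorm_pos cc _).le (φnorm_append_le cc _ _) hh.le
    _ = cc.φnorm (List.ofFn a) ^ h * cc.φnorm (List.ofFn b) ^ h :=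
        Real.mul_rpow (φnorm_pos cc _).le (φnorm_pos cc _).le

lemma S_supermul (h : ℝ) (hh : 0 < h) (m n : ℕ) :
    cc.xi ^ (-h) * (S cc h m * S cc h n) ≤ S cc h (m + n) := by
  rw [S_split cc h m n, S, S, Finset.sum_mul_sum, Fintype.sum_prod_type, Finset.mul_sum]
  apply Finset.sum_le_sum
  intro a _
  rw [Finset.mul_sum]
  apply Finset.sum_le_sum
  intro b _
  have hxi := xi_pos cc
  have e : cc.xi ^ (-h) * (cc.φnorm (List.ofFn a) ^ h * cc.φnorm (List.ofFn b) ^ h)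
      = (cc.xi⁻¹ * (cc.φnorm (List.ofFn a) * cc.φnorm (List.ofFn b))) ^ h := by
    rw [Real.mul_rpow (inv_nonneg.2 hxi.le)
        (mul_nonneg (φnorm_pos cc _).le (φnorm_pos cc _).le),
      Real.mul_rpow (φnorm_pos cc _).le (φnorm_pos cc _).le,
      Real.inv_rpow hxi.le, ← Real.rpow_neg hxi.le]
  rw [e]
  exact Real.rpow_le_rpow
    (mul_nonneg (inv_nonneg.2 hxi.le) (mul_nonneg (φnorm_pos cc _).le (φnorm_pos cc _).le))
    (le_φnorm_append cc _ _) hh.le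

lemma S_bounds (h : ℝ) (hh : 0 < h)
    (hQ : Filter.Tendsto (fun k : ℕ => (1 / (k : ℝ)) * Real.log (S cc h k))
      Filter.atTop (nhds 0))
    (n : ℕ) (hn : 1 ≤ n) : 1 ≤ S cc h n ∧ S cc h n ≤ cc.xi ^ h := by
  have hxi := xi_pos cc
  have hn' : (0:ℝ) < n := by exact_mod_cast hn
  -- log subadditivity / superadditivity
  have la : ∀ m k : ℕ, Real.log (S cc h (m + k)) ≤ Real.log (S cc h m) + Real.log (S cc h k) := by
    intro m k
    rw [← Real.log_mul (ne_of_gt (S_pos cc h m)) (ne_of_gt (S_pos cc h k))]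
    exact (Real.log_le_log_iff (S_pos cc h _) (mul_pos (S_pos cc h m) (S_pos cc h k))).2
      (S_submul cc h hh m k)
  have lb : ∀ m k : ℕ, Real.log (S cc h m) + Real.log (S cc h k) - h * Real.log cc.xi
      ≤ Real.log (S cc h (m + k)) := by
    intro m k
    have h1 : Real.log (cc.xi ^ (-h) * (S cc h m * S cc h k)) ≤ Real.log (S cc h (m + k)) :=
      (Real.log_le_log_iff
        (mul_pos (Real.rpow_pos_of_pos hxi _) (mul_pos (S_pos cc h m) (S_pos cc h k)))
        (S_pos cc h _)).2 (S_supermul cc h hh m k)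
    rw [Real.log_mul (ne_of_gt (Real.rpow_pos_of_pos hxi _))
        (ne_of_gt (mul_pos (S_pos cc h m) (S_pos cc h k))),
      Real.log_rpow hxi, Real.log_mul (ne_of_gt (S_pos cc h m)) (ne_of_gt (S_pos cc h k))] at h1
    linarith
  have iterA : ∀ j : ℕ, Real.log (S cc h ((j + 1) * n)) ≤ (j + 1 : ℝ) * Real.log (S cc h n) := by
    intro j
    induction j with
    | zero => simp
    | succ j ih =>
      have e : (j + 1 + 1) * n = (j + 1) * n + n := by ring
      rw [e]
      have hla := la ((j + 1) * n) n
      push_cast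
      push_cast at ih
      linarith
  have iterB : ∀ j : ℕ, (j + 1 : ℝ) * (Real.log (S cc h n) - h * Real.log cc.xi)
      ≤ Real.log (S cc h ((j + 1) * n)) - h * Real.log cc.xi := by
    intro j
    induction j with
    | zero => simp
    | succ j ih =>
      have e : (j + 1 + 1) * n = (j + 1) * n + n := by ring
      rw [e]
      have hlb := lb ((j + 1) * n) n
      push_cast
      push_cast at ih
      linarith
  -- the subsequence limit
  have hmono : ∀ j : ℕ, j ≤ (j + 1) * n := fun j =>
    le_trans (Nat.le_succ j) (Nat.le_mul_of_pos_right _ (by omega))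
  have hsub : Filter.Tendsto
      (fun j : ℕ => (1 / (((j + 1) * n : ℕ) : ℝ)) * Real.log (S cc h ((j + 1) * n)))
      Filter.atTop (nhds 0) :=
    hQ.comp (Filter.tendsto_atTop_mono hmono Filter.tendsto_id)
  have hm_pos : ∀ j : ℕ, (0:ℝ) < (((j + 1) * n : ℕ) : ℝ) := by
    intro j
    have : 0 < (j + 1) * n := Nat.mul_pos (Nat.succ_pos j) (by omega)
    exact_mod_cast this
  constructor
  · -- 1 ≤ S n
    have h1 : (0:ℝ) ≤ Real.log (S cc h n) / n := by
      apply le_of_tendsto hsub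
      filter_upwards with j
      have hm := hm_pos j
      have : (1 / (((j + 1) * n : ℕ) : ℝ)) * Real.log (S cc h ((j + 1) * n))
          ≤ (1 / (((j + 1) * n : ℕ) : ℝ)) * ((j + 1 : ℝ) * Real.log (S cc h n)) := by
        gcongr
        · exact (iterA j)
      refine this.trans (le_of_eq ?_)
      push_cast
      field_simp
    have : 0 ≤ Real.log (S cc h n) := by
      by_contra hcon
      push_neg at hcon
      have := div_neg_of_neg_of_pos hcon hn'
      linarith
    exact (Real.log_nonneg_iff (S_pos cc h n)).1 this
  · -- S n ≤ xi ^ h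
    have hconst : Filter.Tendsto
        (fun j : ℕ => h * Real.log cc.xi / (((j + 1) * n : ℕ) : ℝ))
        Filter.atTop (nhds 0) :=
      (tendsto_const_div_atTop_nhds_zero_nat (h * Real.log cc.xi)).comp
        (Filter.tendsto_atTop_mono hmono Filter.tendsto_id)
    have hsub2 : Filter.Tendsto
        (fun j : ℕ => (1 / (((j + 1) * n : ℕ) : ℝ)) * Real.log (S cc h ((j + 1) * n))
          - h * Real.log cc.xi / (((j + 1) * n : ℕ) : ℝ))
        Filter.atTop (nhds 0) := by
      have := hsub.sub hconst
      simpa using this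
    have h2 : (Real.log (S cc h n) - h * Real.log cc.xi) / n ≤ 0 := by
      apply ge_of_tendsto hsub2
      filter_upwards with j
      have hm := hm_pos j
      have key := iterB j
      have e1 : (1 / (((j + 1) * n : ℕ) : ℝ)) * Real.log (S cc h ((j + 1) * n))
          - h * Real.log cc.xi / (((j + 1) * n : ℕ) : ℝ)
          = (Real.log (S cc h ((j + 1) * n)) - h * Real.log cc.xi)
            / (((j + 1) * n : ℕ) : ℝ) := by
        field_simp
      rw [e1, div_le_div_iff₀ hn' (hm_pos j)]
      have e2 : (((j + 1) * n : ℕ) : ℝ) = (j + 1 : ℝ) * n := by push_cast; ring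
      rw [e2]
      nlinarith [mul_le_mul_of_nonneg_right key (le_of_lt hn')]
    have hlog : Real.log (S cc h n) ≤ h * Real.log cc.xi := by
      by_contra hcon
      push_neg at hcon
      have := div_pos (by linarith : (0:ℝ) < Real.log (S cc h n) - h * Real.log cc.xi) hn'
      linarith
    rw [← Real.log_rpow hxi] at hlog
    exact (Real.log_le_log_iff (S_pos cc h n) (by positivity)).1 hlog

end CCAux

theorem sum_diam_h_bounds (cc : CookieCutter) (Q : ℝ → ℝ)
    (hQ : ∀ t : ℝ, Filter.Tendsto
      (fun k : ℕ => (1 / (k : ℝ)) * Real.log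
        (∑ σ : Fin k → Fin cc.N, cc.φnorm (List.ofFn σ) ^ t))
      Filter.atTop (nhds (Q t)))
    (h : ℝ) (hh0 : 0 < h) (hQh : Q h = 0) :
    ∀ n : ℕ, 1 ≤ n →
      cc.xi ^ (-(3 * h)) ≤ ∑ σ : Fin n → Fin cc.N, cc.diamJ (List.ofFn σ) ^ h ∧
      ∑ σ : Fin n → Fin cc.N, cc.diamJ (List.ofFn σ) ^ h ≤ cc.xi ^ (3 * h) := by
  intro n hn
  have hxi := CCAux.xi_pos cc
  have hxi1 := CCAux.one_le_xi cc
  have hQ' : Filter.Tendsto (fun k : ℕ => (1 / (k : ℝ)) * Real.log (CCAux.S cc h k))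
      Filter.atTop (nhds 0) := hQh ▸ hQ h
  obtain ⟨hS1, hS2⟩ := CCAux.S_bounds cc h hh0 hQ' n hn
  have termwise_up : ∀ σ : Fin n → Fin cc.N,
      cc.diamJ (List.ofFn σ) ^ h ≤ cc.φnorm (List.ofFn σ) ^ h := fun σ =>
    Real.rpow_le_rpow (Metric.diam_nonneg) (CCAux.diamJ_le cc _) hh0.le
  have termwise_lo : ∀ σ : Fin n → Fin cc.N,
      cc.xi ^ (-h) * cc.φnorm (List.ofFn σ) ^ h ≤ cc.diamJ (List.ofFn σ) ^ h := by
    intro σ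
    have e : cc.xi ^ (-h) * cc.φnorm (List.ofFn σ) ^ h
        = (cc.xi⁻¹ * cc.φnorm (List.ofFn σ)) ^ h := by
      rw [Real.mul_rpow (inv_nonneg.2 hxi.le) (CCAux.φnorm_pos cc _).le,
        Real.inv_rpow hxi.le, ← Real.rpow_neg hxi.le]
    rw [e]
    exact Real.rpow_le_rpow (mul_nonneg (inv_nonneg.2 hxi.le) (CCAux.φnorm_pos cc _).le)
      (CCAux.diamJ_ge cc _) hh0.le
  constructor
  · calc cc.xi ^ (-(3 * h)) ≤ cc.xi ^ (-h) :=
        Real.rpow_le_rpow_of_exponent_le hxi1 (by linarith)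
      _ = cc.xi ^ (-h) * 1 := (mul_one _).symm
      _ ≤ cc.xi ^ (-h) * CCAux.S cc h n := by
          gcongr
      _ = ∑ σ : Fin n → Fin cc.N, cc.xi ^ (-h) * cc.φnorm (List.ofFn σ) ^ h := by
          rw [CCAux.S, Finset.mul_sum]
      _ ≤ ∑ σ : Fin n → Fin cc.N, cc.diamJ (List.ofFn σ) ^ h :=
          Finset.sum_le_sum (fun σ _ => termwise_lo σ)
  · calc ∑ σ : Fin n → Fin cc.N, cc.diamJ (List.ofFn σ) ^ h
        ≤ ∑ σ : Fin n → Fin cc.N, cc.φnorm (List.ofFn σ) ^ h :=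
          Finset.sum_le_sum (fun σ _ => termwise_up σ)
      _ = CCAux.S cc h n := rfl
      _ ≤ cc.xi ^ h := hS2
      _ ≤ cc.xi ^ (3 * h) := Real.rpow_le_rpow_of_exponent_le hxi1 (by linarith)
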